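/- Let m ≥ 2 and let 𝔤 be the Killing algebra of ℝ^m with bracket ⁅(A,a),(B,b)⁆ = (B·A − A·B, B·a − A·b), and let rad 𝔤 = {(0,b) : b ∈ ℝ^m} be the ideal of constant Killing fields. If 𝔥 ⊆ 𝔤 is a Lie subalgebra which is a vector-space complement of rad 𝔤 (i.e., 𝔥 ∩ rad 𝔤 = 0 and 𝔥 + rad 𝔤 = 𝔤), then there exists a unique point m₀ ∈ ℝ^m such that 𝔥 = 𝔤_{m₀} := {(A, −A·m₀) : A skew-symmetric}, the subalgebra of Killing fields vanishing at m₀. -/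

import Mathlib

open Matrix

/-- The Killing algebra of `ℝ^m`: pairs `(A, b)` with `A` skew-symmetric. -/
def killingAlg (m : ℕ) : Submodule ℝ (Matrix (Fin m) (Fin m) ℝ × (Fin m → ℝ)) where
  carrier := {p | p.1ᵀ = -p.1}
  add_mem' := by
    intro p q hp hq
    simp only [Set.mem_setOf_eq] at *
    simp [Matrix.transpose_add, hp, hq]; abel
  zero_mem' := by simp
  smul_mem' := by
    intro c p hp
    simp only [Set.mem_setOf_eq] at *
    simp [Matrix.transpose_smul, hp]

/-- The Lie bracket `⁅(A,a),(B,b)⁆ = (B·A − A·B, B·a − A·b)` of the Killing algebra. -/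
def killingBracket {m : ℕ} (p q : Matrix (Fin m) (Fin m) ℝ × (Fin m → ℝ)) :
    Matrix (Fin m) (Fin m) ℝ × (Fin m → ℝ) :=
  (q.1 * p.1 - p.1 * q.1, q.1.mulVec p.2 - p.1.mulVec q.2)

/-- The subspace `rad 𝔤 = {(0, b) : b ∈ ℝ^m}` of constant Killing fields. -/
def killingRad (m : ℕ) : Submodule ℝ (Matrix (Fin m) (Fin m) ℝ × (Fin m → ℝ)) where
  carrier := {p | p.1 = 0}
  add_mem' := by
    intro p q hp hq
    simp only [Set.mem_setOf_eq] at *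
    simp [hp, hq]
  zero_mem' := by simp
  smul_mem' := by
    intro c p hp
    simp only [Set.mem_setOf_eq] at *
    simp [hp]

/-- The subalgebra `𝔤_{m₀} = {(A, −A·m₀) : A skew}` of Killing fields vanishing at `m₀`. -/
def killingIsotropy (m : ℕ) (m₀ : Fin m → ℝ) :
    Submodule ℝ (Matrix (Fin m) (Fin m) ℝ × (Fin m → ℝ)) where
  carrier := {p | p.1ᵀ = -p.1 ∧ p.2 = -(p.1.mulVec m₀)}
  add_mem' := by
    rintro p q ⟨hp1, hp2⟩ ⟨hq1, hq2⟩
    refine ⟨by simp [Matrix.transpose_add, hp1, hq1]; abel, ?_⟩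
    simp [Matrix.add_mulVec, hp2, hq2]; abel
  zero_mem' := by simp
  smul_mem' := by
    rintro c p ⟨hp1, hp2⟩
    exact ⟨by simp [Matrix.transpose_smul, hp1],
      by simp [Matrix.smul_mulVec, hp2]⟩

section KillingAux
open Matrix Finset

variable {m : ℕ}

/-- The standard skew basis matrix `E_ij - E_ji`. -/
def Cm (m : ℕ) (i j : Fin m) : Matrix (Fin m) (Fin m) ℝ :=
  Matrix.of fun a b => (if a = i ∧ b = j then (1:ℝ) else 0) - (if a = j ∧ b = i then 1 else 0)

lemma Cm_transpose (i j : Fin m) : (Cm m i j)ᵀ = -(Cm m i j) := by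
  ext a b
  simp only [Cm, Matrix.transpose_apply, Matrix.neg_apply, Matrix.of_apply]
  have h1 : (b = i ∧ a = j) = (a = j ∧ b = i) := propext and_comm
  have h2 : (b = j ∧ a = i) = (a = i ∧ b = j) := propext and_comm
  simp only [h1, h2]; ring

lemma Cm_mulVec (i j : Fin m) (v : Fin m → ℝ) (a : Fin m) :
    (Cm m i j).mulVec v a = (if a = i then v j else 0) - (if a = j then v i else 0) := by
  simp [Cm, Matrix.mulVec, dotProduct, sub_mul, ite_and, Finset.sum_sub_distrib,
    Finset.sum_ite_eq, Finset.sum_ite_eq']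

lemma Cm_sq_sum (b : Fin m → ℝ) :
    ∑ i : Fin m, ∑ j : Fin m, (Cm m i j).mulVec ((Cm m i j).mulVec b)
      = (2 - 2*(m:ℝ)) • b := by
  funext a
  simp only [Finset.sum_apply, Pi.smul_apply, smul_eq_mul]
  have : ∀ i j : Fin m, (Cm m i j).mulVec ((Cm m i j).mulVec b) a
      = (if a = i then ((if j = i then b j else 0) - b i) else 0)
        - (if a = j then (b j - (if i = j then b i else 0)) else 0) := by
    intro i j
    rw [Cm_mulVec]
    congr 1
    · congr 1; rw [Cm_mulVec]; simp
    · congr 1; rw [Cm_mulVec]; simp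
  simp only [this]
  rw [Finset.sum_comm]
  simp [Finset.sum_sub_distrib, Finset.sum_ite_eq, Finset.sum_ite_eq',
    Finset.sum_const, Finset.card_univ]
  ring

lemma D_expand {B : Matrix (Fin m) (Fin m) ℝ} (hB : Bᵀ = -B) (i j : Fin m) :
    B * Cm m i j - Cm m i j * B
      = ∑ k : Fin m, (B k i • Cm m k j + B k j • Cm m i k) := by
  have hB' : ∀ a b : Fin m, B b a = - B a b := fun a b => congrFun (congrFun hB a) b
  ext a b
  simp only [Matrix.sub_apply, Matrix.mul_apply, Matrix.sum_apply, Matrix.add_apply,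
    Matrix.smul_apply, smul_eq_mul, Cm, Matrix.of_apply]
  simp only [mul_sub, sub_mul, mul_ite, ite_mul, mul_one, one_mul, mul_zero, zero_mul,
    ite_and, Finset.sum_sub_distrib]
  simp only [Finset.sum_ite_eq, Finset.sum_ite_eq', Finset.mem_univ, if_true]
  split_ifs <;>
    (simp only [ite_self, sub_zero, zero_sub, Finset.sum_sub_distrib, Finset.sum_add_distrib,
      Finset.sum_neg_distrib, apply_ite (fun x : ℝ => -x), neg_zero, Finset.sum_ite_eq, Finset.sum_ite_eq',
      Finset.mem_univ, if_true, Finset.sum_const_zero, add_zero, zero_add, neg_neg];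
     try linarith [hB' i j, hB' j i, hB' i b, hB' b i, hB' j b, hB' b j, hB' a b, hB' b a,
       hB' a i, hB' i a, hB' a j, hB' j a])

lemma sum_mulVec' (f : Fin m → Matrix (Fin m) (Fin m) ℝ) (v : Fin m → ℝ) :
    (∑ k : Fin m, f k).mulVec v = ∑ k : Fin m, (f k).mulVec v := by
  ext a
  simp only [Matrix.mulVec, dotProduct, Finset.sum_apply, Matrix.sum_apply, Finset.sum_mul]
  exact Finset.sum_comm

lemma anti_sum {B : Matrix (Fin m) (Fin m) ℝ} (hB : Bᵀ = -B)
    (g : Fin m → Fin m → (Fin m → ℝ)) :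
    ∑ i : Fin m, ∑ k : Fin m, (B k i • g i k + B k i • g k i) = 0 := by
  have hB' : ∀ a b : Fin m, B a b = - B b a := fun a b => congrFun (congrFun hB b) a
  have h2 : (∑ i : Fin m, ∑ k : Fin m, B k i • g k i)
      = ∑ i : Fin m, ∑ k : Fin m, -(B k i • g i k) := by
    rw [Finset.sum_comm]
    exact Finset.sum_congr rfl fun x _ => Finset.sum_congr rfl fun y _ => by
      rw [hB' x y, neg_smul]
  calc ∑ i : Fin m, ∑ k : Fin m, (B k i • g i k + B k i • g k i)
      = (∑ i : Fin m, ∑ k : Fin m, B k i • g i k)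
        + ∑ i : Fin m, ∑ k : Fin m, B k i • g k i := by
        simp [Finset.sum_add_distrib]
    _ = 0 := by rw [h2]; simp [← Finset.sum_add_distrib]

end KillingAux
/-- If a Lie subalgebra `𝔥` of the Killing algebra `𝔤` of `ℝ^m` (`m ≥ 2`) is a vector-space
complement of the ideal `rad 𝔤` of constant Killing fields, then `𝔥` is the isotropy
subalgebra `𝔤_{m₀}` of Killing fields vanishing at a unique point `m₀ ∈ ℝ^m`. -/
theorem complement_of_rad_is_isotropy (m : ℕ) (hm : 2 ≤ m)
    (h : Submodule ℝ (Matrix (Fin m) (Fin m) ℝ × (Fin m → ℝ)))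
    (hsub : h ≤ killingAlg m)
    (hclosed : ∀ p ∈ h, ∀ q ∈ h, killingBracket p q ∈ h)
    (hinf : h ⊓ killingRad m = ⊥)
    (hsup : h ⊔ killingRad m = killingAlg m) :
    ∃! m₀ : Fin m → ℝ, h = killingIsotropy m m₀ := by
  classical
  have huniq : ∀ (A : Matrix (Fin m) (Fin m) ℝ) (b₁ b₂ : Fin m → ℝ),
      (A, b₁) ∈ h → (A, b₂) ∈ h → b₁ = b₂ := by
    intro A b₁ b₂ h1 h2
    have hd : ((A, b₁) - (A, b₂) : Matrix (Fin m) (Fin m) ℝ × (Fin m → ℝ)) ∈ h :=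
      Submodule.sub_mem h h1 h2
    have hr : ((A, b₁) - (A, b₂) : Matrix (Fin m) (Fin m) ℝ × (Fin m → ℝ)) ∈ killingRad m := by
      show ((A, b₁) - (A, b₂) : Matrix (Fin m) (Fin m) ℝ × (Fin m → ℝ)).1 = 0
      simp
    have hmem : ((A, b₁) - (A, b₂) : Matrix (Fin m) (Fin m) ℝ × (Fin m → ℝ)) ∈
        h ⊓ killingRad m := ⟨hd, hr⟩
    rw [hinf, Submodule.mem_bot] at hmem
    have h2' : b₁ - b₂ = 0 := congrArg Prod.snd hmem
    exact sub_eq_zero.mp h2'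
  have hex : ∀ (A : Matrix (Fin m) (Fin m) ℝ), Aᵀ = -A → ∃ b, (A, b) ∈ h := by
    intro A hA
    have hAmem : ((A, 0) : Matrix (Fin m) (Fin m) ℝ × (Fin m → ℝ)) ∈ killingAlg m := hA
    rw [← hsup] at hAmem
    rcases Submodule.mem_sup.mp hAmem with ⟨y, hy, z, hz, hyz⟩
    have hz1 : z.1 = 0 := hz
    have hy1 : y.1 = A := by
      have := congrArg Prod.fst hyz
      simpa [hz1] using this
    refine ⟨y.2, ?_⟩
    have hyeq : ((A, y.2) : Matrix (Fin m) (Fin m) ℝ × (Fin m → ℝ)) = y := by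
      rw [← hy1]
    rw [hyeq]; exact hy
  choose ψ hψ using fun i j => hex (Cm m i j) (Cm_transpose i j)
  set S : Fin m → ℝ := ∑ i : Fin m, ∑ j : Fin m, (Cm m i j).mulVec (ψ i j) with hSdef
  set r : ℝ := 2*(m:ℝ) - 2 with hrdef
  have hm2 : (2:ℝ) ≤ (m:ℝ) := by exact_mod_cast hm
  have hr0 : r ≠ 0 := by rw [hrdef]; nlinarith
  set m₀ : Fin m → ℝ := r⁻¹ • S with hm₀def
  have key : ∀ p ∈ h, p.2 = -(p.1.mulVec m₀) := by
    rintro ⟨B, b⟩ hp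
    have hBskew : Bᵀ = -B := hsub hp
    have hdiamond : ∀ i j, B.mulVec (ψ i j)
        = (Cm m i j).mulVec b + ∑ k : Fin m, (B k i • ψ k j + B k j • ψ i k) := by
      intro i j
      have h1' : ((B * Cm m i j - Cm m i j * B,
          B.mulVec (ψ i j) - (Cm m i j).mulVec b) :
          Matrix (Fin m) (Fin m) ℝ × (Fin m → ℝ)) ∈ h := hclosed _ (hψ i j) _ hp
      have h2 : (∑ k : Fin m, (B k i • ((Cm m k j, ψ k j) :
            Matrix (Fin m) (Fin m) ℝ × (Fin m → ℝ))
          + B k j • ((Cm m i k, ψ i k) : Matrix (Fin m) (Fin m) ℝ × (Fin m → ℝ)))) ∈ h :=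
        Submodule.sum_mem h fun k _ => Submodule.add_mem h
          (Submodule.smul_mem h _ (hψ k j)) (Submodule.smul_mem h _ (hψ i k))
      have hpair : (∑ k : Fin m, (B k i • ((Cm m k j, ψ k j) :
            Matrix (Fin m) (Fin m) ℝ × (Fin m → ℝ))
          + B k j • ((Cm m i k, ψ i k) : Matrix (Fin m) (Fin m) ℝ × (Fin m → ℝ))))
          = ((B * Cm m i j - Cm m i j * B,
              ∑ k : Fin m, (B k i • ψ k j + B k j • ψ i k)) :
              Matrix (Fin m) (Fin m) ℝ × (Fin m → ℝ)) := by
        rw [Prod.ext_iff]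
        constructor
        · rw [Prod.fst_sum, D_expand hBskew i j]
          simp
        · rw [Prod.snd_sum]
          simp
      rw [hpair] at h2
      have heq := huniq _ _ _ h1' h2
      rw [sub_eq_iff_eq_add] at heq
      rw [heq, add_comm]
    have per : ∀ i j, B.mulVec ((Cm m i j).mulVec (ψ i j))
        = (Cm m i j).mulVec ((Cm m i j).mulVec b)
          + ((∑ k : Fin m, (B k i • (Cm m k j).mulVec (ψ i j)
                + B k i • (Cm m i j).mulVec (ψ k j)))
            + (∑ k : Fin m, (B k j • (Cm m i k).mulVec (ψ i j)
                + B k j • (Cm m i j).mulVec (ψ i k)))) := by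
      intro i j
      have e1 : B.mulVec ((Cm m i j).mulVec (ψ i j)) = (B * Cm m i j).mulVec (ψ i j) := by
        rw [Matrix.mulVec_mulVec]
      have e2 : (B * Cm m i j) = (B * Cm m i j - Cm m i j * B) + Cm m i j * B := by abel
      have e3 : (Cm m i j).mulVec (∑ k : Fin m, (B k i • ψ k j + B k j • ψ i k))
          = ∑ k : Fin m, (B k i • (Cm m i j).mulVec (ψ k j)
              + B k j • (Cm m i j).mulVec (ψ i k)) := by
        simp only [← Matrix.mulVecLin_apply, map_sum, map_add, LinearMap.map_smul]
      rw [e1, e2, Matrix.add_mulVec, D_expand hBskew i j, sum_mulVec',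
        ← Matrix.mulVec_mulVec, hdiamond i j, Matrix.mulVec_add, e3]
      simp only [Matrix.add_mulVec, Matrix.smul_mulVec, Finset.sum_add_distrib]
      abel
    have hBS : B.mulVec S = (-r) • b := by
      have hstep : B.mulVec S = ∑ i : Fin m, ∑ j : Fin m,
          B.mulVec ((Cm m i j).mulVec (ψ i j)) := by
        rw [hSdef]
        simp only [← Matrix.mulVecLin_apply, map_sum]
      rw [hstep]
      have hper : ∑ i : Fin m, ∑ j : Fin m, B.mulVec ((Cm m i j).mulVec (ψ i j))
          = (∑ i : Fin m, ∑ j : Fin m, (Cm m i j).mulVec ((Cm m i j).mulVec b))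
            + ((∑ i : Fin m, ∑ j : Fin m, ∑ k : Fin m,
                (B k i • (Cm m k j).mulVec (ψ i j) + B k i • (Cm m i j).mulVec (ψ k j)))
              + (∑ i : Fin m, ∑ j : Fin m, ∑ k : Fin m,
                (B k j • (Cm m i k).mulVec (ψ i j) + B k j • (Cm m i j).mulVec (ψ i k)))) := by
        simp only [per, Finset.sum_add_distrib]
      rw [hper]
      have hX : (∑ i : Fin m, ∑ j : Fin m, ∑ k : Fin m,
          (B k i • (Cm m k j).mulVec (ψ i j) + B k i • (Cm m i j).mulVec (ψ k j))) = 0 := by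
        rw [Finset.sum_comm]
        refine Finset.sum_eq_zero fun j _ => ?_
        have := anti_sum hBskew (fun x y => (Cm m x j).mulVec (ψ y j))
        rw [← this]
        exact Finset.sum_congr rfl fun i _ => Finset.sum_congr rfl fun k _ => by
          rw [add_comm]
      have hY : (∑ i : Fin m, ∑ j : Fin m, ∑ k : Fin m,
          (B k j • (Cm m i k).mulVec (ψ i j) + B k j • (Cm m i j).mulVec (ψ i k))) = 0 := by
        refine Finset.sum_eq_zero fun i _ => ?_
        have := anti_sum hBskew (fun x y => (Cm m i x).mulVec (ψ i y))
        rw [← this]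
        exact Finset.sum_congr rfl fun j _ => Finset.sum_congr rfl fun k _ => by
          rw [add_comm]
      rw [hX, hY, Cm_sq_sum]
      simp [hrdef]
    show b = -(B.mulVec m₀)
    rw [hm₀def, Matrix.mulVec_smul, hBS, smul_smul]
    rw [show r⁻¹ * -r = -1 by field_simp]
    simp
  refine ⟨m₀, ?_, ?_⟩
  · apply le_antisymm
    · intro p hp
      exact ⟨hsub hp, key p hp⟩
    · rintro ⟨A, v⟩ ⟨hA, hv⟩
      obtain ⟨b, hb⟩ := hex A hA
      have hbv : b = -(A.mulVec m₀) := key (A, b) hb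
      have hv' : v = -(A.mulVec m₀) := hv
      have hvb : v = b := hv'.trans hbv.symm
      rw [hvb]; exact hb
  · intro y hy
    have hmain : h = killingIsotropy m m₀ := by
      apply le_antisymm
      · intro p hp
        exact ⟨hsub hp, key p hp⟩
      · rintro ⟨A, v⟩ ⟨hA, hv⟩
        obtain ⟨b, hb⟩ := hex A hA
        have hbv : b = -(A.mulVec m₀) := key (A, b) hb
        have hv' : v = -(A.mulVec m₀) := hv
        have hvb : v = b := hv'.trans hbv.symm
        rw [hvb]; exact hb
    funext j
    obtain ⟨i, hij⟩ := Fintype.exists_ne_of_one_lt_card (by simpa using (show 1 < m by omega)) j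
    have hCy : ((Cm m i j, -((Cm m i j).mulVec y)) :
        Matrix (Fin m) (Fin m) ℝ × (Fin m → ℝ)) ∈ killingIsotropy m y :=
      ⟨Cm_transpose i j, rfl⟩
    rw [← hy, hmain] at hCy
    have hCeq : -((Cm m i j).mulVec y) = -((Cm m i j).mulVec m₀) := hCy.2
    have hCeq' : (Cm m i j).mulVec y = (Cm m i j).mulVec m₀ := by
      have := congrArg Neg.neg hCeq; simpa using this
    have := congrFun hCeq' i
    rw [Cm_mulVec, Cm_mulVec] at this
    simpa [hij] using this
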